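/- Suppose x : [0,∞) → ℝ^{2m} and h : [0,∞) → ℝ^{2m} are differentiable with ẋ(t) = h(t) − K_f x(t) and ḣ(t) = −K_h h(t), where K_f, K_h are positive definite symmetric matrices such that the block matrix [[−K_f, (1/2)I],[(1/2)I, −K_h]] is negative definite. Then V(t) = (1/2)‖x(t)‖² + (1/2)‖h(t)‖² is strictly decreasing whenever (x(t),h(t)) ≠ (0,0), and x(t), h(t) → 0 as t → ∞. -/

import Mathlib

open Matrix Filter

lemma posdef_lb {n : Type*} [Fintype n] [DecidableEq n]
    (M : Matrix n n ℝ) (hM : M.PosDef) :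
    ∃ c > 0, ∀ z : n → ℝ, c * (z ⬝ᵥ z) ≤ z ⬝ᵥ M.mulVec z := by
  cases isEmpty_or_nonempty n with
  | inl hemp =>
    refine ⟨1, one_pos, fun z => ?_⟩
    simp [dotProduct]
  | inr hne =>
    set f : (n → ℝ) → ℝ := fun z => z ⬝ᵥ M.mulVec z with hf
    have hfc : Continuous f := by
      simp only [hf, dotProduct, mulVec]
      exact continuous_finset_sum _ fun i _ => (continuous_apply i).mul
        (continuous_finset_sum _ fun j _ => continuous_const.mul (continuous_apply j))
    set S : Set (n → ℝ) := {z | z ⬝ᵥ z = 1} with hS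
    have hdc : Continuous fun z : n → ℝ => z ⬝ᵥ z := by
      simp only [dotProduct]
      exact continuous_finset_sum _ fun i _ => (continuous_apply i).mul (continuous_apply i)
    have hSc : IsClosed S := isClosed_eq hdc continuous_const
    have hSb : S ⊆ Metric.closedBall 0 1 := by
      intro z hz
      rw [Metric.mem_closedBall, dist_zero_right, pi_norm_le_iff_of_nonneg zero_le_one]
      intro i
      rw [Real.norm_eq_abs, abs_le_one_iff_mul_self_le_one]
      calc z i * z i ≤ ∑ j, z j * z j :=
            Finset.single_le_sum (fun j _ => mul_self_nonneg (z j)) (Finset.mem_univ i)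
        _ = 1 := hz
    have hScomp : IsCompact S :=
      (isCompact_closedBall (0 : n → ℝ) 1).of_isClosed_subset hSc hSb
    have hSne : S.Nonempty := by
      obtain ⟨i⟩ := hne
      refine ⟨Pi.single i 1, ?_⟩
      simp [hS, dotProduct, Pi.single_apply]
    obtain ⟨z0, hz0S, hz0min⟩ := hScomp.exists_isMinOn hSne hfc.continuousOn
    have hz0ne : z0 ≠ 0 := by
      intro hz
      rw [hz] at hz0S
      simp [hS, dotProduct] at hz0S
    have hpos : ∀ z : n → ℝ, z ≠ 0 → 0 < f z := by
      intro z hz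
      have := hM.dotProduct_mulVec_pos hz
      simpa using this
    refine ⟨f z0, hpos z0 hz0ne, fun z => ?_⟩
    rcases eq_or_ne z 0 with rfl | hz
    · simp [hf, dotProduct]
    · have hzz : 0 < z ⬝ᵥ z := by
        have h1 : z ⬝ᵥ z = ∑ i, z i * z i := rfl
        have : ∃ i, z i ≠ 0 := by
          by_contra hc
          push_neg at hc
          exact hz (funext hc)
        obtain ⟨i, hi⟩ := this
        rw [h1]
        exact Finset.sum_pos' (fun j _ => mul_self_nonneg _)
          ⟨i, Finset.mem_univ i, mul_self_pos.2 hi⟩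
      set r := Real.sqrt (z ⬝ᵥ z) with hr
      have hrpos : 0 < r := Real.sqrt_pos.2 hzz
      have hr2 : r * r = z ⬝ᵥ z := Real.mul_self_sqrt hzz.le
      set u : n → ℝ := r⁻¹ • z with hu
      have huz : z = r • u := by
        rw [hu, smul_smul, mul_inv_cancel₀ hrpos.ne', one_smul]
      have huS : u ∈ S := by
        show u ⬝ᵥ u = 1
        rw [hu, smul_dotProduct, dotProduct_smul, smul_eq_mul, smul_eq_mul, ← mul_assoc,
          ← mul_inv, ← hr2]
        field_simp
      have hfz : f z = (r * r) * f u := by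
        rw [huz, hf]
        simp only [smul_dotProduct, mulVec_smul, dotProduct_smul, smul_eq_mul]
        ring
      have := hz0min huS
      calc f z0 * (z ⬝ᵥ z) = (r * r) * f z0 := by rw [hr2]; ring
        _ ≤ (r * r) * f u := by
            apply mul_le_mul_of_nonneg_left this (by positivity)
        _ = f z := hfz.symm

/-- Global asymptotic stability of the expanded herding system: under
`ẋ = h − K_f x`, `ḣ = −K_h h` with the block matrix `K` negative definite, the Lyapunov
function `V = ½‖x‖² + ½‖h‖²` is strictly decreasing whenever `(x, h) ≠ (0, 0)`, and
`x(t), h(t) → 0` as `t → ∞`. -/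
theorem expanded_system_GAS
    (m : ℕ) (Kf Kh : Matrix (Fin (2 * m)) (Fin (2 * m)) ℝ)
    (hKf : Kf.PosDef) (hKh : Kh.PosDef)
    (hK : (-(Matrix.fromBlocks (-Kf) ((1 / 2 : ℝ) • (1 : Matrix (Fin (2 * m)) (Fin (2 * m)) ℝ))
        ((1 / 2 : ℝ) • (1 : Matrix (Fin (2 * m)) (Fin (2 * m)) ℝ)) (-Kh))).PosDef)
    (x h : ℝ → Fin (2 * m) → ℝ)
    (hx : ∀ t, HasDerivAt x (h t - Kf.mulVec (x t)) t)
    (hh : ∀ t, HasDerivAt h (-(Kh.mulVec (h t))) t) :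
    (∀ t, 0 ≤ t → ¬(x t = 0 ∧ h t = 0) →
      deriv (fun s => (1 / 2 : ℝ) * (∑ i, (x s i) ^ 2) + (1 / 2 : ℝ) * (∑ i, (h s i) ^ 2)) t < 0) ∧
    Tendsto x atTop (nhds 0) ∧ Tendsto h atTop (nhds 0) := by
  set M : Matrix (Fin (2 * m) ⊕ Fin (2 * m)) (Fin (2 * m) ⊕ Fin (2 * m)) ℝ :=
    -(Matrix.fromBlocks (-Kf) ((1 / 2 : ℝ) • 1) ((1 / 2 : ℝ) • 1) (-Kh)) with hMdef
  set z : ℝ → (Fin (2 * m) ⊕ Fin (2 * m)) → ℝ := fun t => Sum.elim (x t) (h t) with hzdef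
  set V : ℝ → ℝ :=
    fun s => (1 / 2 : ℝ) * (∑ i, (x s i) ^ 2) + (1 / 2 : ℝ) * (∑ i, (h s i) ^ 2) with hVdef
  have hquad : ∀ t, z t ⬝ᵥ M.mulVec (z t)
      = x t ⬝ᵥ Kf.mulVec (x t) + h t ⬝ᵥ Kh.mulVec (h t) - x t ⬝ᵥ h t := by
    intro t
    have hM' : M = Matrix.fromBlocks Kf (-((1 / 2 : ℝ) • 1)) (-((1 / 2 : ℝ) • 1)) Kh := by
      rw [hMdef, Matrix.fromBlocks_neg]; simp
    rw [hM', hzdef]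
    rw [Matrix.fromBlocks_mulVec, sumElim_dotProduct_sumElim]
    simp only [Matrix.neg_mulVec, Matrix.smul_mulVec, Matrix.one_mulVec,
      Sum.elim_comp_inl, Sum.elim_comp_inr,
      dotProduct_add, dotProduct_neg, dotProduct_smul, smul_eq_mul]
    rw [dotProduct_comm (h t) (x t)]
    ring
  have hV : ∀ t, HasDerivAt V
      (x t ⬝ᵥ (h t - Kf.mulVec (x t)) + h t ⬝ᵥ (-(Kh.mulVec (h t)))) t := by
    intro t
    have h1 : HasDerivAt (fun s => ∑ i, (x s i) ^ 2)
        (∑ i, 2 * x t i * (h t - Kf.mulVec (x t)) i) t := by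
      apply HasDerivAt.fun_sum
      intro i _
      have : HasDerivAt (fun s => x s i ^ 2) _ t := ((hasDerivAt_pi.1 (hx t)) i).pow 2
      simpa [mul_comm, mul_assoc, mul_left_comm] using this
    have h2 : HasDerivAt (fun s => ∑ i, (h s i) ^ 2)
        (∑ i, 2 * h t i * (-(Kh.mulVec (h t))) i) t := by
      apply HasDerivAt.fun_sum
      intro i _
      have : HasDerivAt (fun s => h s i ^ 2) _ t := ((hasDerivAt_pi.1 (hh t)) i).pow 2
      simpa [mul_comm, mul_assoc, mul_left_comm] using this
    have h3 := (h1.const_mul (1 / 2 : ℝ)).add (h2.const_mul (1 / 2 : ℝ))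
    have heq : x t ⬝ᵥ (h t - Kf.mulVec (x t)) + h t ⬝ᵥ (-(Kh.mulVec (h t)))
        = (1 / 2 : ℝ) * (∑ i, 2 * x t i * (h t - Kf.mulVec (x t)) i)
          + (1 / 2 : ℝ) * (∑ i, 2 * h t i * (-(Kh.mulVec (h t))) i) := by
      simp only [dotProduct, Finset.mul_sum]
      congr 1 <;> exact Finset.sum_congr rfl fun i _ => by ring
    rw [heq]
    exact h3
  have hD : ∀ t, deriv V t = -(z t ⬝ᵥ M.mulVec (z t)) := by
    intro t
    rw [(hV t).deriv, hquad t]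
    simp only [dotProduct_sub, dotProduct_neg]
    ring
  obtain ⟨c, hc, hcb⟩ := posdef_lb M hK
  have hVnonneg : ∀ t, 0 ≤ V t := by
    intro t
    simp only [hVdef]
    have h1 : 0 ≤ ∑ i, (x t i) ^ 2 := Finset.sum_nonneg fun i _ => sq_nonneg _
    have h2 : 0 ≤ ∑ i, (h t i) ^ 2 := Finset.sum_nonneg fun i _ => sq_nonneg _
    linarith
  have hzz2V : ∀ t, z t ⬝ᵥ z t = 2 * V t := by
    intro t
    simp only [hzdef, sumElim_dotProduct_sumElim, hVdef, dotProduct, pow_two,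
      Fintype.sum_sum_type, Sum.elim_inl, Sum.elim_inr]
    ring
  constructor
  · intro t ht hne
    show deriv V t < 0
    rw [hD t]
    have hex : ∃ j, z t j ≠ 0 := by
      by_contra hcon
      push_neg at hcon
      apply hne
      constructor
      · funext i; simpa [hzdef] using hcon (Sum.inl i)
      · funext i; simpa [hzdef] using hcon (Sum.inr i)
    obtain ⟨j, hj⟩ := hex
    have hzz : 0 < z t ⬝ᵥ z t := by
      show 0 < ∑ k, z t k * z t k
      exact Finset.sum_pos' (fun k _ => mul_self_nonneg _)
        ⟨j, Finset.mem_univ j, mul_self_pos.2 hj⟩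
    linarith [hcb (z t), mul_pos hc hzz]
  · -- asymptotic part
    have hVle : ∀ t, deriv V t ≤ -(2 * c) * V t := by
      intro t
      rw [hD t]
      have h1 := hcb (z t)
      rw [hzz2V t] at h1
      linarith
    set g : ℝ → ℝ := fun s => V s * Real.exp (2 * c * s) with hgdef
    have hgd : ∀ t, HasDerivAt g ((deriv V t + 2 * c * V t) * Real.exp (2 * c * t)) t := by
      intro t
      have hVd : HasDerivAt V (deriv V t) t := by
        rw [(hV t).deriv]; exact hV t
      have he : HasDerivAt (fun s => Real.exp (2 * c * s))
          (Real.exp (2 * c * t) * (2 * c)) t := by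
        simpa using ((hasDerivAt_id t).const_mul (2 * c)).exp
      have : HasDerivAt (fun s => V s * Real.exp (2 * c * s)) _ t := hVd.mul he
      convert this using 1
      ring
    have hganti : Antitone g := by
      apply antitone_of_deriv_nonpos (fun t => (hgd t).differentiableAt)
      intro t
      rw [(hgd t).deriv]
      have h1 := hVle t
      have h2 : deriv V t + 2 * c * V t ≤ 0 := by linarith
      have h3 : (0 : ℝ) < Real.exp (2 * c * t) := Real.exp_pos _
      nlinarith
    have hVbound : ∀ t, 0 ≤ t → V t ≤ V 0 * Real.exp (-(2 * c * t)) := by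
      intro t ht
      have h1 : V t * Real.exp (2 * c * t) ≤ V 0 * Real.exp (2 * c * 0) := hganti ht
      calc V t = (V t * Real.exp (2 * c * t)) * Real.exp (-(2 * c * t)) := by
            rw [mul_assoc, ← Real.exp_add]; simp
        _ ≤ (V 0 * Real.exp (2 * c * 0)) * Real.exp (-(2 * c * t)) :=
            mul_le_mul_of_nonneg_right h1 (Real.exp_pos _).le
        _ = V 0 * Real.exp (-(2 * c * t)) := by simp
    have hVtend : Tendsto V atTop (nhds 0) := by
      have hmul : Tendsto (fun t : ℝ => 2 * c * t) atTop atTop :=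
        Tendsto.const_mul_atTop (by linarith) tendsto_id
      have hexp : Tendsto (fun t : ℝ => Real.exp (-(2 * c * t))) atTop (nhds 0) := by
        have := Real.tendsto_exp_neg_atTop_nhds_zero.comp hmul
        simpa [Function.comp_def] using this
      have hbd : Tendsto (fun t : ℝ => V 0 * Real.exp (-(2 * c * t))) atTop (nhds 0) := by
        have := hexp.const_mul (V 0)
        simpa using this
      exact tendsto_of_tendsto_of_tendsto_of_le_of_le' tendsto_const_nhds hbd
        (Eventually.of_forall hVnonneg) (eventually_atTop.2 ⟨0, hVbound⟩)
    have key : ∀ (w : ℝ → Fin (2 * m) → ℝ), (∀ t i, (w t i) ^ 2 ≤ 2 * V t) →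
        Tendsto w atTop (nhds 0) := by
      intro w hw
      rw [tendsto_pi_nhds]
      intro i
      have h2V : Tendsto (fun t => 2 * V t) atTop (nhds 0) := by
        have := hVtend.const_mul (2:ℝ)
        rwa [mul_zero] at this
      have hsq : Tendsto (fun t => (w t i) ^ 2) atTop (nhds 0) :=
        tendsto_of_tendsto_of_tendsto_of_le_of_le' tendsto_const_nhds h2V
          (Eventually.of_forall fun t => sq_nonneg _)
          (Eventually.of_forall fun t => hw t i)
      have habs : Tendsto (fun t => |w t i|) atTop (nhds 0) := by
        have := (Real.continuous_sqrt.tendsto 0).comp hsq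
        simpa [Function.comp_def, Real.sqrt_sq_eq_abs] using this
      have : Tendsto (fun t => w t i) atTop (nhds 0) :=
        (tendsto_zero_iff_abs_tendsto_zero _).2 habs
      simpa using this
    refine ⟨key x ?_, key h ?_⟩ <;> intro t i
    · have h1 : (x t i) ^ 2 ≤ ∑ j, (x t j) ^ 2 :=
        Finset.single_le_sum (f := fun j => (x t j) ^ 2) (fun j _ => sq_nonneg _) (Finset.mem_univ i)
      have h2 : 0 ≤ ∑ j, (h t j) ^ 2 := Finset.sum_nonneg fun j _ => sq_nonneg _
      simp only [hVdef]; linarith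
    · have h1 : (h t i) ^ 2 ≤ ∑ j, (h t j) ^ 2 :=
        Finset.single_le_sum (f := fun j => (h t j) ^ 2) (fun j _ => sq_nonneg _) (Finset.mem_univ i)
      have h2 : 0 ≤ ∑ j, (x t j) ^ 2 := Finset.sum_nonneg fun j _ => sq_nonneg _
      simp only [hVdef]; linarith
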